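/- Let X be a two-dimensional Banach space and C a closed bounded convex subset of X. Then every semi denting point of C is a denting point of C. -/

import Mathlib

variable {X : Type*} [NormedAddCommGroup X] [NormedSpace ℝ X]

/-- The slice of a set `C` determined by `f` and `δ`:
`S(C, f, δ) = {z ∈ C : f z > sup f(C) - δ}`. -/
def sliceOf (C : Set X) (f : X →L[ℝ] ℝ) (δ : ℝ) : Set X :=
  {z ∈ C | f z > sSup (f '' C) - δ}

/-- The set of denting points of `C`: points `x ∈ C` such that for every `ε > 0` some
slice of `C` contains `x` and is contained in `B(x, ε)`. -/
def dentingPoints (C : Set X) : Set X :=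
  {x ∈ C | ∀ ε > (0 : ℝ), ∃ (f : X →L[ℝ] ℝ) (δ : ℝ), 0 < δ ∧
    x ∈ sliceOf C f δ ∧ sliceOf C f δ ⊆ Metric.closedBall x ε}

/-- The set of semi denting points of `C`: points `x ∈ C` such that for every `ε > 0` some
slice of `C` is contained in `B(x, ε)`. -/
def semiDentingPoints (C : Set X) : Set X :=
  {x ∈ C | ∀ ε > (0 : ℝ), ∃ (f : X →L[ℝ] ℝ) (δ : ℝ), 0 < δ ∧
    sliceOf C f δ ⊆ Metric.closedBall x ε}



section AuxProofs
open Set Metric Module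


lemma aux_isCompact_convexHull [FiniteDimensional ℝ X] {s : Set X} (hs : IsCompact s) :
    IsCompact (convexHull ℝ s) := by
  classical
  rcases s.eq_empty_or_nonempty with rfl | ⟨p₀, hp₀⟩
  · simpa using isCompact_empty
  set n := Module.finrank ℝ X + 1 with hn
  have hK : IsCompact ((stdSimplex ℝ (Fin n)) ×ˢ (Set.pi Set.univ fun _ : Fin n => s)) :=
    (isCompact_stdSimplex ℝ (Fin n)).prod (isCompact_univ_pi fun _ => hs)
  have hcont : Continuous fun p : (Fin n → ℝ) × (Fin n → X) => ∑ i, p.1 i • p.2 i := by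
    fun_prop
  have himg : (fun p : (Fin n → ℝ) × (Fin n → X) => ∑ i, p.1 i • p.2 i) ''
      ((stdSimplex ℝ (Fin n)) ×ˢ (Set.pi Set.univ fun _ : Fin n => s)) = convexHull ℝ s := by
    apply Subset.antisymm
    · rintro x ⟨⟨w, z⟩, ⟨⟨hw0, hw1⟩, hz⟩, rfl⟩
      exact (convex_convexHull ℝ s).sum_mem (fun i _ => hw0 i) hw1
        (fun i _ => subset_convexHull ℝ s (hz i (mem_univ i)))
    · intro x hx
      obtain ⟨ι, hι, z, w, hzs, hai, hw0, hw1, hwz⟩ := eq_pos_convex_span_of_mem_convexHull hx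
      have hcard : Fintype.card ι ≤ n := by
        refine hai.card_le_finrank_succ.trans ?_
        have := Submodule.finrank_le (vectorSpan ℝ (Set.range z))
        omega
      let j : ι ↪ Fin n := (Fintype.equivFin ι).toEmbedding.trans (Fin.castLEEmb hcard)
      have hjinj : Function.Injective j := j.injective
      set w' : Fin n → ℝ := Function.extend j w 0 with hw'
      set z' : Fin n → X := Function.extend j z (fun _ => p₀) with hz'
      have hwext : ∀ a : ι, w' (j a) = w a := fun a => hjinj.extend_apply w 0 a
      have hzext : ∀ a : ι, z' (j a) = z a := fun a => hjinj.extend_apply z _ a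
      have hoff : ∀ i : Fin n, i ∉ Finset.univ.image j → w' i = 0 := by
        intro i hi
        have : ¬ ∃ a, j a = i := by simpa [Finset.mem_image] using hi
        rw [hw', Function.extend_apply' _ _ _ this, Pi.zero_apply]
      have hsum1 : ∑ i, w' i = 1 := by
        rw [← Finset.sum_subset (Finset.subset_univ (Finset.univ.image j)) (fun i _ hi => hoff i hi),
          Finset.sum_image (fun a _ b _ h => hjinj h)]
        simpa [hwext] using hw1
      have hsum2 : ∑ i, w' i • z' i = x := by
        rw [← Finset.sum_subset (Finset.subset_univ (Finset.univ.image j))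
          (fun i _ hi => by rw [hoff i hi, zero_smul]),
          Finset.sum_image (fun a _ b _ h => hjinj h)]
        simp only [hwext, hzext]
        exact hwz
      refine ⟨⟨w', z'⟩, ⟨⟨fun i => ?_, hsum1⟩, fun i _ => ?_⟩, hsum2⟩
      · show 0 ≤ w' i
        rcases em (∃ a, j a = i) with ⟨a, rfl⟩ | h
        · rw [hwext]; exact (hw0 a).le
        · rw [show w' i = Function.extend (⇑j) w 0 i from rfl, Function.extend_apply' _ _ _ h]; rfl
      · show z' i ∈ s
        rcases em (∃ a, j a = i) with ⟨a, rfl⟩ | h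
        · rw [hzext]; exact hzs (mem_range_self a)
        · rw [show z' i = Function.extend (⇑j) z (fun _ => p₀) i from rfl, Function.extend_apply' _ _ _ h]; exact hp₀
  rw [← himg]
  exact hK.image hcont


lemma aux_mem_openSegment_of_near {a b x e : X} (hab : a ≠ b) {t : ℝ} (ht0 : 0 < t) (ht1 : t < 1)
    (hx : a + t • (b - a) = x) (hspan : e - x ∈ Submodule.span ℝ {b - a})
    (hnear : ‖e - x‖ < min t (1 - t) * ‖b - a‖) : e ∈ openSegment ℝ a b := by
  obtain ⟨c, hc⟩ := Submodule.mem_span_singleton.1 hspan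
  have hba : (0:ℝ) < ‖b - a‖ := by
    rw [norm_pos_iff, sub_ne_zero]; exact hab.symm
  have hcnorm : |c| * ‖b - a‖ < min t (1 - t) * ‖b - a‖ := by
    rw [← Real.norm_eq_abs, ← norm_smul, hc]; exact hnear
  have hcs : |c| < min t (1 - t) := lt_of_mul_lt_mul_right hcnorm (norm_nonneg _)
  have h1 : |c| < t := lt_of_lt_of_le hcs (min_le_left _ _)
  have h2 : |c| < 1 - t := lt_of_lt_of_le hcs (min_le_right _ _)
  rw [openSegment_eq_image']
  refine ⟨t + c, ⟨?_, ?_⟩, ?_⟩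
  · have := neg_lt_of_abs_lt h1; linarith
  · have := lt_of_abs_lt h2; linarith
  · show a + (t + c) • (b - a) = e
    rw [add_smul, ← add_assoc, hx, hc]; abel

set_option maxHeartbeats 2000000 in
lemma closure_extremePoints_subset_of_dim_two [FiniteDimensional ℝ X]
    (hdim : Module.finrank ℝ X = 2) {C : Set X} (hC : IsClosed C) (hconv : Convex ℝ C) :
    closure (C.extremePoints ℝ) ⊆ C.extremePoints ℝ := by
  intro x hx
  have hxC : x ∈ C := closure_minimal extremePoints_subset hC hx
  by_contra hxne
  rw [mem_extremePoints] at hxne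
  push_neg at hxne
  obtain ⟨a, haC, b, hbC, hseg, hne⟩ := hxne hxC
  rw [openSegment_eq_image'] at hseg
  obtain ⟨t, ⟨ht0, ht1⟩, hxt⟩ := hseg
  have hab : a ≠ b := by
    rintro rfl
    simp only [sub_self, smul_zero, add_zero] at hxt
    exact hne hxt hxt
  have hba : (0:ℝ) < ‖b - a‖ := by rw [norm_pos_iff, sub_ne_zero]; exact hab.symm
  have hr₁ : (0:ℝ) < min t (1 - t) * ‖b - a‖ := by
    have : (0:ℝ) < min t (1 - t) := lt_min ht0 (by linarith)
    positivity
  set r₁ := min t (1 - t) * ‖b - a‖ with hr₁def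
  -- key: from a point e extreme with e - x ∈ span {b-a} and close, contradiction
  have hcontra : ∀ e ∈ C.extremePoints ℝ, e - x ∈ Submodule.span ℝ {b - a} →
      ‖e - x‖ < r₁ → False := by
    intro e he hespan henear
    have : e ∈ openSegment ℝ a b := aux_mem_openSegment_of_near hab ht0 ht1 hxt hespan henear
    have h1 := he.2 haC hbC this
    have h2 := he.2 hbC haC (openSegment_symm ℝ a b ▸ this)
    exact hab (h1.trans h2.symm)
  by_cases hint : (interior C).Nonempty
  · obtain ⟨w, hw⟩ := hint
    by_cases hxint : x ∈ interior C
    · -- x in the interior: nearby extreme points are interior, contradiction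
      obtain ⟨ρ, hρ, hball⟩ := Metric.isOpen_iff.1 isOpen_interior x hxint
      obtain ⟨e, he, hde⟩ := Metric.mem_closure_iff.1 hx (ρ/2) (by positivity)
      have heball : ∀ u : X, ‖u - e‖ < ρ/2 → u ∈ C := by
        intro u hu
        refine interior_subset (hball ?_)
        rw [Metric.mem_ball, dist_eq_norm]
        have h1 : u - x = (u - e) + (e - x) := by abel
        have h2 : ‖e - x‖ < ρ/2 := by rw [← dist_eq_norm, dist_comm]; exact hde
        calc ‖u - x‖ ≤ ‖u - e‖ + ‖e - x‖ := by rw [h1]; exact norm_add_le _ _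
        _ < ρ := by linarith
      have hv : b - a ≠ 0 := sub_ne_zero.2 hab.symm
      set sc := ρ / (4 * ‖b - a‖) with hscdef
      have hsc : 0 < sc := by positivity
      have hscn : ‖sc • (b - a)‖ < ρ/2 := by
        rw [norm_smul, Real.norm_eq_abs, abs_of_pos hsc, hscdef]
        rw [div_mul_eq_mul_div, div_lt_iff₀ (by positivity)]
        nlinarith [hba]
      have h1 : e - sc • (b - a) ∈ C := heball _ (by
        have : e - sc • (b - a) - e = -(sc • (b - a)) := by abel
        rw [this, norm_neg]; exact hscn)
      have h2 : e + sc • (b - a) ∈ C := heball _ (by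
        have : e + sc • (b - a) - e = sc • (b - a) := by abel
        rw [this]; exact hscn)
      have hmid : e ∈ openSegment ℝ (e - sc • (b - a)) (e + sc • (b - a)) := by
        rw [openSegment_eq_image']
        refine ⟨1/2, ⟨by norm_num, by norm_num⟩, ?_⟩
        show (e - sc • (b - a)) + (1/2 : ℝ) • ((e + sc • (b - a)) - (e - sc • (b - a))) = e
        module
      have hcon := he.2 h1 h2 hmid
      have : sc • (b - a) = 0 := by
        have h3 : e - sc • (b - a) - e = 0 := by rw [hcon]; abel
        have h4 : e - sc • (b - a) - e = -(sc • (b - a)) := by abel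
        rw [h4] at h3
        simpa using h3
      rcases smul_eq_zero.1 this with h | h
      · exact hsc.ne' h
      · exact hv h
    · -- x on the boundary: supporting functional argument
      obtain ⟨f, hf⟩ := geometric_hahn_banach_open_point hconv.interior isOpen_interior hxint
      have hfw : f w < f x := hf w hw
      have hfC : ∀ z ∈ C, f z ≤ f x := by
        intro z hz
        by_contra hzgt
        push_neg at hzgt
        have hzw : f w < f z := lt_trans hfw hzgt
        set θ := (f z - f x) / (2 * (f z - f w)) with hθdef
        have hθ0 : 0 < θ := by
          apply div_pos (by linarith) (by linarith)
        have hθhalf : θ ≤ 1/2 := by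
          rw [hθdef, div_le_div_iff₀ (by linarith) (by norm_num)]
          nlinarith
        have hmem : θ • w + (1 - θ) • z ∈ interior C :=
          hconv.combo_interior_closure_mem_interior hw (subset_closure hz) hθ0
            (by linarith) (by ring)
        have hlt := hf _ hmem
        rw [map_add, map_smul, map_smul, smul_eq_mul, smul_eq_mul] at hlt
        have hne2 : f z - f w ≠ 0 := by linarith
        have hkey : θ * (f z - f w) = (f z - f x)/2 := by
          have h2ne : (2:ℝ) * (f z - f w) ≠ 0 := by
            intro h0
            apply hne2
            linarith
          have hcancel : θ * (2 * (f z - f w)) = f z - f x := by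
            rw [hθdef, div_mul_cancel₀ _ h2ne]
          linarith
        nlinarith
      have hfaleq := hfC a haC
      have hfbleq := hfC b hbC
      have hfx : f x = f a + t * (f b - f a) := by
        rw [← hxt, map_add, map_smul, smul_eq_mul, map_sub]
      have hfa : f a = f x := by nlinarith
      have hfb : f b = f x := by nlinarith
      have hv : b - a ≠ 0 := sub_ne_zero.2 hab.symm
      have hfb_a : f (b - a) = 0 := by rw [map_sub, hfa, hfb]; ring
      have hker : Submodule.span ℝ {b - a} = LinearMap.ker (f : X →ₗ[ℝ] ℝ) := by
        apply Submodule.eq_of_le_of_finrank_le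
        · rw [Submodule.span_le, Set.singleton_subset_iff]
          exact LinearMap.mem_ker.2 hfb_a
        · have h1 : finrank ℝ (Submodule.span ℝ {b - a}) = 1 := finrank_span_singleton hv
          have hne : LinearMap.ker (f : X →ₗ[ℝ] ℝ) ≠ ⊤ := by
            intro h
            have hmem : w - x ∈ LinearMap.ker (f : X →ₗ[ℝ] ℝ) := h ▸ Submodule.mem_top
            rw [LinearMap.mem_ker, ContinuousLinearMap.coe_coe, map_sub] at hmem
            linarith
          have h2 : finrank ℝ (LinearMap.ker (f : X →ₗ[ℝ] ℝ)) < finrank ℝ X :=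
            Submodule.finrank_lt hne
          rw [h1]; omega
      set d := f x - f w with hddef
      have hd0 : 0 < d := by rw [hddef]; linarith
      set K₀ := ‖x - w‖ + 1 with hK₀def
      have hK₀0 : 0 < K₀ := by positivity
      set K₂ := 2 * ‖f‖ * K₀ / d + 1 with hK₂def
      have hK₂1 : 1 ≤ K₂ := by
        have : 0 ≤ 2 * ‖f‖ * K₀ / d := by positivity
        rw [hK₂def]; linarith
      have hK₂0 : 0 < K₂ := by linarith
      set r := min (min 1 (r₁ / (2 * K₂))) (d / (2 * (‖f‖ + 1))) with hrdef
      have hr0 : 0 < r := by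
        apply lt_min (lt_min one_pos (by positivity)) (by positivity)
      obtain ⟨e, he, hde⟩ := Metric.mem_closure_iff.1 hx r hr0
      have heC := extremePoints_subset he
      have hex : ‖e - x‖ < r := by rw [← dist_eq_norm, dist_comm]; exact hde
      have hr1 : r ≤ 1 := le_trans (min_le_left _ _) (min_le_left _ _)
      have hrK : r ≤ r₁ / (2 * K₂) := le_trans (min_le_left _ _) (min_le_right _ _)
      have hrd : r ≤ d / (2 * (‖f‖ + 1)) := min_le_right _ _
      have hrr₁ : r ≤ r₁ / 2 := by
        have h1 : r₁ / (2 * K₂) ≤ r₁ / 2 := by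
          apply div_le_div_of_nonneg_left hr₁.le (by norm_num) (by linarith)
        linarith
      have hfe_le : f e ≤ f x := hfC e heC
      have hfdiff : |f (e - x)| ≤ ‖f‖ * ‖e - x‖ := by
        have := f.le_opNorm (e - x)
        rwa [Real.norm_eq_abs] at this
      have hfex : f x - f e ≤ ‖f‖ * r := by
        have h1 : ‖f‖ * ‖e - x‖ ≤ ‖f‖ * r := mul_le_mul_of_nonneg_left hex.le (norm_nonneg _)
        have h2 : f x - f e ≤ |f (e - x)| := by
          rw [map_sub, abs_sub_comm]
          exact le_abs_self _
        linarith
      have hfrd : ‖f‖ * r ≤ d / 2 := by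
        have h1 : ‖f‖ * r ≤ ‖f‖ * (d / (2 * (‖f‖ + 1))) :=
          mul_le_mul_of_nonneg_left hrd (norm_nonneg _)
        have h2 : ‖f‖ * (d / (2 * (‖f‖ + 1))) ≤ d / 2 := by
          rw [mul_div_assoc', div_le_div_iff₀ (by positivity) (by norm_num)]
          nlinarith [norm_nonneg f, hd0]
        linarith
      have hfe_gt_w : f w < f e := by
        have : f x - f e ≤ d / 2 := le_trans hfex hfrd
        rw [hddef] at this
        linarith
      rcases eq_or_lt_of_le hfe_le with heq | hlt
      · refine hcontra e he ?_ ?_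
        · rw [hker, LinearMap.mem_ker, ContinuousLinearMap.coe_coe, map_sub, heq, sub_self]
        · linarith
      · set dfw := f e - f w with hdfwdef
        have hdfw0 : d / 2 ≤ dfw := by
          have : f x - f e ≤ d / 2 := le_trans hfex hfrd
          rw [hdfwdef, hddef] at *
          linarith
        have hdfwpos : 0 < dfw := by linarith
        set s := (f x - f w) / dfw with hsdef
        have hs1 : 1 < s := by
          rw [hsdef, lt_div_iff₀ hdfwpos, one_mul, hdfwdef]
          linarith
        have hs0 : 0 < s := lt_trans one_pos hs1
        set z' := w + s • (e - w) with hz'def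
        have hfz' : f z' = f x := by
          rw [hz'def, map_add, map_smul, smul_eq_mul, map_sub, hsdef, hdfwdef]
          rw [div_mul_cancel₀ _ (show f e - f w ≠ 0 from hdfwpos.ne')]; ring
        have hz'span : z' - x ∈ Submodule.span ℝ {b - a} := by
          rw [hker, LinearMap.mem_ker, ContinuousLinearMap.coe_coe, map_sub, hfz', sub_self]
        have hz'e : z' - e = (s - 1) • (e - w) := by
          rw [hz'def, sub_smul, one_smul]; abel
        have hbound1 : ‖e - w‖ ≤ K₀ := by
          have h1 : e - w = (e - x) + (x - w) := by abel
          have h2 : ‖e - w‖ ≤ ‖e - x‖ + ‖x - w‖ := by rw [h1]; exact norm_add_le _ _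
          rw [hK₀def]
          linarith
        have hs1' : s - 1 ≤ 2 * ‖f‖ * r / d := by
          have hmul : (s - 1) * dfw = f x - f e := by
            rw [hsdef, sub_mul, div_mul_cancel₀ _ hdfwpos.ne', one_mul, hdfwdef]
            ring
          have heq : s - 1 = (f x - f e) / dfw := by
            rw [eq_div_iff hdfwpos.ne']; exact hmul
          have hb1 : (f x - f e) / dfw ≤ ‖f‖ * r / (d / 2) :=
            div_le_div₀ (by positivity) hfex (by linarith) hdfw0
          have hb2 : ‖f‖ * r / (d / 2) = 2 * ‖f‖ * r / d := by
            field_simp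
          rw [heq]
          rw [hb2] at hb1
          exact hb1
        have hz'x : ‖z' - x‖ < r₁ := by
          have h1 : z' - x = (z' - e) + (e - x) := by abel
          have h2 : ‖z' - x‖ ≤ (s - 1) * ‖e - w‖ + ‖e - x‖ := by
            calc ‖z' - x‖ ≤ ‖z' - e‖ + ‖e - x‖ := by rw [h1]; exact norm_add_le _ _
            _ = (s - 1) * ‖e - w‖ + ‖e - x‖ := by
                rw [hz'e, norm_smul, Real.norm_eq_abs, abs_of_nonneg (by linarith : (0:ℝ) ≤ s - 1)]
          have h3 : (s - 1) * ‖e - w‖ ≤ 2 * ‖f‖ * r / d * K₀ := by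
            apply mul_le_mul hs1' hbound1 (norm_nonneg _)
            positivity
          have h4 : 2 * ‖f‖ * r / d * K₀ + r = r * K₂ := by
            rw [hK₂def]; field_simp
          have h5 : r * K₂ ≤ r₁ / 2 := by
            have := mul_le_mul_of_nonneg_right hrK hK₂0.le
            rw [div_mul_eq_mul_div] at this
            calc r * K₂ ≤ r₁ * K₂ / (2 * K₂) := this
            _ = r₁ / 2 := by field_simp
          nlinarith [hex]
        have hz'seg : z' ∈ openSegment ℝ a b :=
          aux_mem_openSegment_of_near hab ht0 ht1 hxt hz'span hz'x
        have hz'C : z' ∈ C :=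
          hconv.segment_subset haC hbC (openSegment_subset_segment ℝ a b hz'seg)
        have hwC : w ∈ C := interior_subset hw
        have hes : e ∈ openSegment ℝ w z' := by
          rw [openSegment_eq_image']
          refine ⟨1/s, ⟨by positivity, by rw [div_lt_one hs0]; linarith⟩, ?_⟩
          show w + (1/s) • (z' - w) = e
          rw [hz'def, add_sub_cancel_left, smul_smul, one_div, inv_mul_cancel₀ hs0.ne', one_smul]
          abel
        have hwe := he.2 hwC hz'C hes
        rw [hwe] at hfe_gt_w
        exact lt_irrefl _ hfe_gt_w
  · -- interior empty: C lies in a line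
    have hspan : affineSpan ℝ C ≠ ⊤ := fun h =>
      hint ((hconv.interior_nonempty_iff_affineSpan_eq_top).2 h)
    set V := affineSpan ℝ C with hV
    have haV : a ∈ V := subset_affineSpan ℝ C haC
    have hbV : b ∈ V := subset_affineSpan ℝ C hbC
    have hxV : x ∈ V := subset_affineSpan ℝ C hxC
    have hVdir : V.direction ≠ ⊤ := by
      intro h
      exact hspan (AffineSubspace.direction_eq_top_iff_of_nonempty ⟨a, haV⟩ |>.1 h)
    have hdirline : Submodule.span ℝ {b - a} = V.direction := by
      apply Submodule.eq_of_le_of_finrank_le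
      · rw [Submodule.span_le, Set.singleton_subset_iff]
        exact AffineSubspace.vsub_mem_direction hbV haV
      · have h1 : finrank ℝ (Submodule.span ℝ {b - a}) = 1 :=
          finrank_span_singleton (sub_ne_zero.2 hab.symm)
        have h2 : finrank ℝ V.direction < finrank ℝ X :=
          Submodule.finrank_lt hVdir
        rw [h1]; omega
    obtain ⟨e, he, hde⟩ := Metric.mem_closure_iff.1 hx r₁ hr₁
    refine hcontra e he ?_ ?_
    · rw [hdirline]
      exact AffineSubspace.vsub_mem_direction (subset_affineSpan ℝ C (extremePoints_subset he)) hxV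
    · rw [← dist_eq_norm, dist_comm]; exact hde

lemma aux_extreme_mem_denting [FiniteDimensional ℝ X] {C : Set X} (hC : IsClosed C)
    (hb : Bornology.IsBounded C) (hconv : Convex ℝ C) {x : X} (hx : x ∈ C.extremePoints ℝ) :
    x ∈ dentingPoints C := by
  have hComp : IsCompact C := Metric.isCompact_of_isClosed_isBounded hC hb
  refine ⟨hx.1, fun ε hε => ?_⟩
  set S := C \ Metric.ball x ε with hS
  have hScomp : IsCompact S := hComp.diff Metric.isOpen_ball
  set D := convexHull ℝ S with hD
  have hDC : D ⊆ C := convexHull_min diff_subset hconv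
  have hDcomp : IsCompact D := aux_isCompact_convexHull hScomp
  have hxD : x ∉ D := by
    intro hxD
    have hxExt : x ∈ D.extremePoints ℝ :=
      ⟨hxD, fun a ha b hb' hseg => hx.2 (hDC ha) (hDC hb') hseg⟩
    have hxS : x ∈ S := extremePoints_convexHull_subset hxExt
    exact hxS.2 (Metric.mem_ball_self hε)
  obtain ⟨f, u, hfu, hux⟩ :=
    geometric_hahn_banach_closed_point (convex_convexHull ℝ S) hDcomp.isClosed hxD
  have hbdd : BddAbove (f '' C) := (hComp.image f.continuous).bddAbove
  have hfxM : f x ≤ sSup (f '' C) := le_csSup hbdd ⟨x, hx.1, rfl⟩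
  refine ⟨f, sSup (f '' C) - u, by linarith, ⟨hx.1, by simp; linarith⟩, ?_⟩
  intro z hz
  by_contra hzb
  have hzS : z ∈ S := ⟨hz.1, fun hzball => hzb (Metric.ball_subset_closedBall hzball)⟩
  have : f z < u := hfu z (subset_convexHull ℝ S hzS)
  have : f z > sSup (f '' C) - (sSup (f '' C) - u) := hz.2
  linarith

lemma aux_semi_mem_closure [FiniteDimensional ℝ X] {C : Set X} (hC : IsClosed C)
    (hb : Bornology.IsBounded C) {x : X} (hx : x ∈ semiDentingPoints C) :
    x ∈ closure (C.extremePoints ℝ) := by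
  have hComp : IsCompact C := Metric.isCompact_of_isClosed_isBounded hC hb
  rw [Metric.mem_closure_iff]
  intro ε hε
  obtain ⟨f, δ, hδ, hslice⟩ := hx.2 (ε / 2) (by positivity)
  obtain ⟨y, hyC, hymax⟩ := hComp.exists_isMaxOn ⟨x, hx.1⟩ f.continuous.continuousOn
  set F := {z ∈ C | ∀ w ∈ C, f w ≤ f z} with hF
  have hFexp : IsExposed ℝ C F := fun _ => ⟨f, rfl⟩
  have hFne : F.Nonempty := ⟨y, hyC, fun w hw => hymax hw⟩
  have hFcomp : IsCompact F := hFexp.isCompact hComp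
  obtain ⟨e, he⟩ := hFcomp.extremePoints_nonempty hFne
  have heC : e ∈ C.extremePoints ℝ := hFexp.isExtreme.extremePoints_subset_extremePoints he
  have heF : e ∈ F := extremePoints_subset he
  have hbdd : BddAbove (f '' C) := (hComp.image f.continuous).bddAbove
  have hM : f e = sSup (f '' C) := by
    refine le_antisymm (le_csSup hbdd ⟨e, heF.1, rfl⟩) (csSup_le ⟨f x, x, hx.1, rfl⟩ ?_)
    rintro _ ⟨w, hw, rfl⟩
    exact heF.2 w hw
  have heslice : e ∈ sliceOf C f δ := ⟨heF.1, by rw [← hM]; linarith⟩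
  have := hslice heslice
  rw [Metric.mem_closedBall] at this
  refine ⟨e, heC, ?_⟩
  rw [dist_comm]
  linarith

end AuxProofs

/-- If `X` is a two-dimensional Banach space and `C` is a closed bounded convex subset of `X`,
then every semi denting point of `C` is a denting point of `C`. -/

theorem semiDentingPoints_subset_dentingPoints_of_finrank_two
    [FiniteDimensional ℝ X] (hdim : Module.finrank ℝ X = 2)
    (C : Set X) (hC : IsClosed C) (hb : Bornology.IsBounded C) (hconv : Convex ℝ C) :
    semiDentingPoints C ⊆ dentingPoints C := by
  intro x hx
  have h1 : x ∈ closure (C.extremePoints ℝ) := aux_semi_mem_closure hC hb hx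
  have h2 : x ∈ C.extremePoints ℝ :=
    closure_extremePoints_subset_of_dim_two hdim hC hconv h1
  exact aux_extreme_mem_denting hC hb hconv h2
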